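/- If B is an equitable quotient matrix of a nonnegative irreducible symmetric real matrix M, then the largest eigenvalue of B equals the largest eigenvalue of M. -/

import Mathlib

open Finset Matrix

private lemma mem_spec_iff' {m : ℕ} (A : Matrix (Fin m) (Fin m) ℝ) (μ : ℝ) :
    μ ∈ spectrum ℝ A ↔ ∃ v, v ≠ 0 ∧ A *ᵥ v = μ • v := by
  rw [spectrum.mem_iff, Matrix.isUnit_iff_isUnit_det, isUnit_iff_ne_zero, not_not,
    ← Matrix.exists_mulVec_eq_zero_iff]
  have key : ∀ v : Fin m → ℝ, (algebraMap ℝ _ μ - A) *ᵥ v = μ • v - A *ᵥ v := by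
    intro v
    rw [Matrix.sub_mulVec, Algebra.algebraMap_eq_smul_one, Matrix.smul_mulVec,
      Matrix.one_mulVec]
  constructor
  · rintro ⟨v, hv, h⟩
    exact ⟨v, hv, by rw [key v, sub_eq_zero] at h; exact h.symm⟩
  · rintro ⟨v, hv, h⟩
    exact ⟨v, hv, by rw [key v, sub_eq_zero, h]⟩

private lemma spec_transpose {m : ℕ} (A : Matrix (Fin m) (Fin m) ℝ) :
    spectrum ℝ Aᵀ = spectrum ℝ A := by
  ext μ
  simp only [spectrum.mem_iff, Matrix.isUnit_iff_isUnit_det, not_iff_not]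
  have h : (algebraMap ℝ (Matrix (Fin m) (Fin m) ℝ) μ - A)ᵀ
      = algebraMap ℝ (Matrix (Fin m) (Fin m) ℝ) μ - Aᵀ := by
    rw [Matrix.transpose_sub, Algebra.algebraMap_eq_smul_one,
      Matrix.transpose_smul, Matrix.transpose_one]
  rw [← h, Matrix.det_transpose]

theorem stmt_9 {n k : ℕ} (M : Matrix (Fin n) (Fin n) ℝ) (hM : M.IsSymm)
    (hnonneg : ∀ i j, 0 ≤ M i j)
    (hirr : ∀ i j : Fin n, ∃ m : ℕ, 0 < (M ^ m) i j)
    (p : Fin n → Fin k) (hp : Function.Surjective p)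
    (B : Matrix (Fin k) (Fin k) ℝ)
    (hB : ∀ (i : Fin n) (j : Fin k),
      ∑ y ∈ Finset.univ.filter (fun y => p y = j), M i y = B (p i) j) :
    sSup (spectrum ℝ B) = sSup (spectrum ℝ M) := by
  classical
  rcases Nat.eq_zero_or_pos n with hn | hn
  · subst hn
    have hk : k = 0 := by
      by_contra h
      obtain ⟨i, -⟩ := hp ⟨0, Nat.pos_of_ne_zero h⟩
      exact i.elim0
    subst hk
    have h1 : spectrum ℝ B = ∅ := by
      ext μ; simp [spectrum.mem_iff, isUnit_of_subsingleton]
    have h2 : spectrum ℝ M = ∅ := by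
      ext μ; simp [spectrum.mem_iff, isUnit_of_subsingleton]
    rw [h1, h2]
  · have hM' : M.IsHermitian := by
      ext i j
      simp only [Matrix.conjTranspose_apply, star_trivial]
      exact hM.apply i j
    have SMfin : (spectrum ℝ M).Finite := Matrix.finite_spectrum M
    have SMne : (spectrum ℝ M).Nonempty :=
      ⟨_, hM'.eigenvalues_mem_spectrum_real ⟨0, hn⟩⟩
    have hbddM : BddAbove (spectrum ℝ M) := SMfin.bddAbove
    set lam := sSup (spectrum ℝ M) with hlamdef
    have hlam : lam ∈ spectrum ℝ M := SMne.csSup_mem SMfin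
    obtain ⟨x, hx0, hx⟩ := (mem_spec_iff' M lam).1 hlam
    have hA' : (lam • 1 - M).IsHermitian := by
      ext i j
      simp only [Matrix.conjTranspose_apply, star_trivial, Matrix.sub_apply,
        Matrix.smul_apply, Matrix.one_apply, smul_eq_mul]
      rw [hM.apply i j]
      rcases eq_or_ne i j with rfl | hij
      · rfl
      · rw [if_neg hij, if_neg (Ne.symm hij)]
    have hPSD : (lam • 1 - M).PosSemidef := by
      apply hA'.posSemidef_iff_eigenvalues_nonneg.mpr
      intro i
      show 0 ≤ hA'.eigenvalues i
      obtain ⟨v, hv0, hv⟩ := (mem_spec_iff' _ _).1 (hA'.eigenvalues_mem_spectrum_real i)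
      rw [Matrix.sub_mulVec, Matrix.smul_mulVec, Matrix.one_mulVec] at hv
      have h2 : M *ᵥ v = (lam - hA'.eigenvalues i) • v := by
        rw [sub_smul, ← hv]; abel
      have h3 : lam - hA'.eigenvalues i ∈ spectrum ℝ M :=
        (mem_spec_iff' M _).2 ⟨v, hv0, h2⟩
      have h4 : lam - hA'.eigenvalues i ≤ lam := le_csSup hbddM h3
      linarith
    set y : Fin n → ℝ := fun i => |x i| with hy
    have hyne : y ≠ 0 := by
      obtain ⟨i, hi⟩ : ∃ i, x i ≠ 0 := by
        by_contra h; push_neg at h; exact hx0 (funext h)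
      intro h
      exact hi (abs_eq_zero.1 (congrFun h i))
    have hxy : x ⬝ᵥ x = y ⬝ᵥ y := by
      simp only [dotProduct, hy, abs_mul_abs_self]
    have hMxx : x ⬝ᵥ (M *ᵥ x) = lam * (y ⬝ᵥ y) := by
      rw [hx, dotProduct_smul, smul_eq_mul, hxy]
    have hineq : x ⬝ᵥ (M *ᵥ x) ≤ y ⬝ᵥ (M *ᵥ y) := by
      simp only [dotProduct, Matrix.mulVec, Finset.mul_sum]
      apply Finset.sum_le_sum
      intro i _
      apply Finset.sum_le_sum
      intro j _
      calc x i * (M i j * x j) ≤ |x i * (M i j * x j)| := le_abs_self _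
        _ = y i * (M i j * y j) := by
            rw [abs_mul, abs_mul, abs_of_nonneg (hnonneg i j)]
    have hstar : star y = y := funext fun i => star_trivial _
    have hzero : (lam • 1 - M) *ᵥ y = 0 := by
      rw [← hPSD.dotProduct_mulVec_zero_iff y, hstar]
      have h1 : y ⬝ᵥ ((lam • 1 - M) *ᵥ y) = lam * (y ⬝ᵥ y) - y ⬝ᵥ (M *ᵥ y) := by
        rw [Matrix.sub_mulVec, dotProduct_sub, Matrix.smul_mulVec,
          Matrix.one_mulVec, dotProduct_smul, smul_eq_mul]
      have h2 := hPSD.dotProduct_mulVec_nonneg y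
      rw [hstar] at h2
      apply le_antisymm _ h2
      rw [h1]
      linarith
    have hMy : M *ᵥ y = lam • y := by
      rw [Matrix.sub_mulVec, Matrix.smul_mulVec, Matrix.one_mulVec,
        sub_eq_zero] at hzero
      exact hzero.symm
    have hyM : y ᵥ* M = lam • y := by
      rw [← Matrix.mulVec_transpose, hM, hMy]
    set v : Fin k → ℝ := fun c => ∑ i ∈ Finset.univ.filter (fun i => p i = c), y i with hv
    have hvne : v ≠ 0 := by
      obtain ⟨i, hi⟩ : ∃ i, y i ≠ 0 := by
        by_contra h; push_neg at h; exact hyne (funext h)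
      intro h
      have h1 : y i ≤ v (p i) :=
        Finset.single_le_sum (fun j _ => abs_nonneg (x j)) (by simp)
      have h2 : 0 < y i := (abs_nonneg (x i)).lt_of_ne (Ne.symm hi)
      rw [congrFun h (p i)] at h1
      simp only [Pi.zero_apply] at h1
      linarith
    have hvB : v ᵥ* B = lam • v := by
      funext c
      have step : ∀ i : Fin n, B (p i) c = ∑ j ∈ Finset.univ.filter (fun j => p j = c), M i j :=
        fun i => (hB i c).symm
      calc (v ᵥ* B) c = ∑ d, v d * B d c := by
            simp [Matrix.vecMul, dotProduct]
        _ = ∑ d, ∑ i ∈ Finset.univ.filter (fun i => p i = d), y i * B d c := by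
            simp [hv, Finset.sum_mul]
        _ = ∑ d, ∑ i ∈ Finset.univ.filter (fun i => p i = d), y i * B (p i) c := by
            refine Finset.sum_congr rfl fun d _ => Finset.sum_congr rfl fun i hi => ?_
            rw [(Finset.mem_filter.1 hi).2]
        _ = ∑ i, y i * B (p i) c := Finset.sum_fiberwise _ _ _
        _ = ∑ i, ∑ j ∈ Finset.univ.filter (fun j => p j = c), y i * M i j := by
            refine Finset.sum_congr rfl fun i _ => ?_
            rw [step i, Finset.mul_sum]
        _ = ∑ j ∈ Finset.univ.filter (fun j => p j = c), ∑ i, y i * M i j :=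
            Finset.sum_comm
        _ = ∑ j ∈ Finset.univ.filter (fun j => p j = c), lam * y j := by
            refine Finset.sum_congr rfl fun j _ => ?_
            have := congrFun hyM j
            simpa [Matrix.vecMul, dotProduct] using this
        _ = lam * v c := by rw [hv, ← Finset.mul_sum]
        _ = (lam • v) c := rfl
    have hlamB : lam ∈ spectrum ℝ B := by
      rw [← spec_transpose]
      exact (mem_spec_iff' _ _).2 ⟨v, hvne, by rw [Matrix.mulVec_transpose, hvB]⟩
    have hsub : spectrum ℝ B ⊆ spectrum ℝ M := by
      intro μ hμ
      obtain ⟨w, hw0, hw⟩ := (mem_spec_iff' B μ).1 hμ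
      refine (mem_spec_iff' M μ).2 ⟨w ∘ p, ?_, ?_⟩
      · obtain ⟨c, hc⟩ : ∃ c, w c ≠ 0 := by
          by_contra h; push_neg at h; exact hw0 (funext h)
        obtain ⟨i, rfl⟩ := hp c
        intro h; exact hc (congrFun h i)
      · funext i
        have : (M *ᵥ (w ∘ p)) i = ∑ j, M i j * w (p j) := by
          simp [Matrix.mulVec, dotProduct]
        rw [this]
        calc ∑ j, M i j * w (p j)
            = ∑ c, ∑ j ∈ Finset.univ.filter (fun j => p j = c), M i j * w (p j) :=
              (Finset.sum_fiberwise _ _ _).symm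
          _ = ∑ c, (∑ j ∈ Finset.univ.filter (fun j => p j = c), M i j) * w c := by
              refine Finset.sum_congr rfl fun c _ => ?_
              rw [Finset.sum_mul]
              refine Finset.sum_congr rfl fun j hj => ?_
              rw [(Finset.mem_filter.1 hj).2]
          _ = ∑ c, B (p i) c * w c := by
              refine Finset.sum_congr rfl fun c _ => ?_
              rw [hB i c]
          _ = (B *ᵥ w) (p i) := by simp [Matrix.mulVec, dotProduct]
          _ = μ * w (p i) := by rw [hw]; rfl
          _ = (μ • (w ∘ p)) i := rfl
    refine le_antisymm ?_ ?_
    · exact csSup_le_csSup hbddM ⟨lam, hlamB⟩ hsub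
    · exact le_csSup (hbddM.mono hsub) hlamB
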